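/- Let ν ∈ ℕ, ν ≥ 1, and let 0 < α < ν, 0 < β < ν with α + β > ν. Then there exists a constant C = C_{α,β;ν} > 0 such that for every x ∈ ℝ^ν with x ≠ 0, the function y ↦ |y|^{−α}·|x−y|^{−β} is integrable on ℝ^ν and ∫_{ℝ^ν} |y|^{−α}·|x−y|^{−β} dy = C·|x|^{−(α+β−ν)}. -/

import Mathlib

open MeasureTheory Metric Set Real Module
open scoped ENNReal NNReal

set_option maxHeartbeats 1000000

noncomputable section

/-- Integrability of `‖y‖ ^ (-s)` on a closed ball when `s < ν`. -/
lemma riesz_integrableOn_closedBall (ν : ℕ) {s : ℝ} (hs0 : 0 < s) (hsν : s < ν) (R : ℝ) :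
    IntegrableOn (fun y : EuclideanSpace ℝ (Fin ν) => ‖y‖ ^ (-s))
      (closedBall 0 R) volume := by
  have hmeas : Measurable fun y : EuclideanSpace ℝ (Fin ν) => ‖y‖ ^ (-s) :=
    by fun_prop
  refine ⟨hmeas.aestronglyMeasurable.restrict, ?_⟩
  rw [hasFiniteIntegral_iff_ofReal (ae_of_all _ fun y => by positivity)]
  rw [lintegral_eq_lintegral_meas_le _ (ae_of_all _ fun y => by positivity)
    hmeas.aemeasurable.restrict]
  set μR := (volume : Measure (EuclideanSpace ℝ (Fin ν))).restrict (closedBall 0 R)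
  have hsplit : ∫⁻ t in Ioi (0:ℝ), μR {a | t ≤ ‖a‖ ^ (-s)}
      ≤ (∫⁻ t in Ioc (0:ℝ) 1, μR {a | t ≤ ‖a‖ ^ (-s)})
        + ∫⁻ t in Ioi (1:ℝ), μR {a | t ≤ ‖a‖ ^ (-s)} :=
    le_trans (lintegral_mono_set Ioi_subset_Ioc_union_Ioi) (lintegral_union_le _ _ _)
  refine lt_of_le_of_lt hsplit (ENNReal.add_lt_top.2 ⟨?_, ?_⟩)
  · calc ∫⁻ t in Ioc (0:ℝ) 1, μR {a | t ≤ ‖a‖ ^ (-s)}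
        ≤ ∫⁻ _t in Ioc (0:ℝ) 1, volume (closedBall (0 : EuclideanSpace ℝ (Fin ν)) R) := by
          refine setLIntegral_mono' measurableSet_Ioc fun t _ => ?_
          calc μR {a | t ≤ ‖a‖ ^ (-s)} ≤ μR univ := measure_mono (subset_univ _)
            _ = volume (closedBall (0 : EuclideanSpace ℝ (Fin ν)) R) := by
                simp [μR]
      _ < ∞ := by
          rw [setLIntegral_const]
          exact ENNReal.mul_lt_top measure_closedBall_lt_top (by simp)
  · have hbound : ∀ t ∈ Ioi (1:ℝ), μR {a | t ≤ ‖a‖ ^ (-s)}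
        ≤ ENNReal.ofReal (t ^ (-((ν:ℝ)/s)))
            * volume (ball (0 : EuclideanSpace ℝ (Fin ν)) 1) := by
      intro t ht
      have ht0 : (0:ℝ) < t := lt_trans one_pos ht
      have hsub : {a : EuclideanSpace ℝ (Fin ν) | t ≤ ‖a‖ ^ (-s)}
          ⊆ closedBall 0 (t ^ (-s⁻¹)) := by
        intro a ha
        have ha0 : a ≠ 0 := by
          rintro rfl
          simp only [mem_setOf_eq, norm_zero] at ha
          rw [Real.zero_rpow (neg_ne_zero.2 hs0.ne')] at ha
          exact absurd (lt_of_lt_of_le ht0 ha) (lt_irrefl 0)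
        have hna : (0:ℝ) < ‖a‖ := norm_pos_iff.2 ha0
        have : (‖a‖ ^ (-s)) ^ (-s⁻¹) ≤ t ^ (-s⁻¹) :=
          Real.rpow_le_rpow_of_nonpos ht0 ha.out (neg_nonpos.2 (inv_nonneg.2 hs0.le))
        rw [mem_closedBall, dist_zero_right]
        calc ‖a‖ = (‖a‖ ^ (-s)) ^ (-s⁻¹) := by
              rw [← Real.rpow_mul (norm_nonneg a), neg_mul_neg,
                mul_inv_cancel₀ hs0.ne', Real.rpow_one]
          _ ≤ t ^ (-s⁻¹) := this
      calc μR {a | t ≤ ‖a‖ ^ (-s)}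
          ≤ volume {a : EuclideanSpace ℝ (Fin ν) | t ≤ ‖a‖ ^ (-s)} :=
            Measure.restrict_le_self _
        _ ≤ volume (closedBall (0 : EuclideanSpace ℝ (Fin ν)) (t ^ (-s⁻¹))) :=
            measure_mono hsub
        _ = ENNReal.ofReal ((t ^ (-s⁻¹)) ^ finrank ℝ (EuclideanSpace ℝ (Fin ν)))
              * volume (ball (0 : EuclideanSpace ℝ (Fin ν)) 1) :=
            Measure.addHaar_closedBall _ _ (by positivity)
        _ = ENNReal.ofReal (t ^ (-((ν:ℝ)/s)))
              * volume (ball (0 : EuclideanSpace ℝ (Fin ν)) 1) := by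
            congr 1
            rw [finrank_euclideanSpace_fin, ← Real.rpow_natCast (t ^ (-s⁻¹)) ν,
              ← Real.rpow_mul ht0.le]
            congr 1
            field_simp
    calc ∫⁻ t in Ioi (1:ℝ), μR {a | t ≤ ‖a‖ ^ (-s)}
        ≤ ∫⁻ t in Ioi (1:ℝ), ENNReal.ofReal (t ^ (-((ν:ℝ)/s)))
            * volume (ball (0 : EuclideanSpace ℝ (Fin ν)) 1) :=
          setLIntegral_mono' measurableSet_Ioi hbound
      _ = (∫⁻ t in Ioi (1:ℝ), ENNReal.ofReal (t ^ (-((ν:ℝ)/s))))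
            * volume (ball (0 : EuclideanSpace ℝ (Fin ν)) 1) :=
          lintegral_mul_const' _ _ measure_ball_lt_top.ne
      _ < ∞ := by
          refine ENNReal.mul_lt_top ?_ measure_ball_lt_top
          refine IntegrableOn.setLIntegral_lt_top ?_
          exact integrableOn_Ioi_rpow_of_lt (by
            rw [neg_lt_neg_iff]
            exact (one_lt_div hs0).2 hsν) one_pos

/-- Integrability of `‖y‖ ^ (-s)` outside a ball when `s > ν`. -/
lemma riesz_integrableOn_tail (ν : ℕ) {s d : ℝ} (hs : (ν:ℝ) < s) (hd : 0 < d) :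
    IntegrableOn (fun y : EuclideanSpace ℝ (Fin ν) => ‖y‖ ^ (-s))
      {y | d ≤ ‖y‖} volume := by
  have hs0 : 0 < s := lt_of_le_of_lt (Nat.cast_nonneg ν) hs
  have hmeas : Measurable fun y : EuclideanSpace ℝ (Fin ν) => ‖y‖ ^ (-s) := by fun_prop
  have base : Integrable (fun y : EuclideanSpace ℝ (Fin ν) => (1 + ‖y‖) ^ (-s)) volume :=
    integrable_one_add_norm (by rwa [finrank_euclideanSpace_fin])
  have hset : MeasurableSet {y : EuclideanSpace ℝ (Fin ν) | d ≤ ‖y‖} :=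
    measurableSet_le measurable_const measurable_norm
  refine Integrable.mono' ((base.const_mul ((1 + d⁻¹) ^ s)).integrableOn)
    hmeas.aestronglyMeasurable.restrict ?_
  filter_upwards [ae_restrict_mem hset] with y hy
  have hy0 : (0:ℝ) < ‖y‖ := lt_of_lt_of_le hd hy
  have h1 : (1:ℝ) + ‖y‖ ≤ (1 + d⁻¹) * ‖y‖ := by
    have : (1:ℝ) ≤ d⁻¹ * ‖y‖ := by
      rw [← div_eq_inv_mul, le_div_iff₀ hd]
      simpa using hy
    nlinarith
  have hq : (0:ℝ) < (1 + ‖y‖) / (1 + d⁻¹) := by positivity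
  have h2 : (1 + ‖y‖) / (1 + d⁻¹) ≤ ‖y‖ := by
    rw [div_le_iff₀ (by positivity)]
    linarith [h1]
  have h3 : ‖y‖ ^ (-s) ≤ ((1 + ‖y‖) / (1 + d⁻¹)) ^ (-s) :=
    Real.rpow_le_rpow_of_nonpos hq h2 (neg_nonpos.2 hs0.le)
  rw [Real.norm_of_nonneg (by positivity)]
  refine h3.trans (le_of_eq ?_)
  rw [Real.div_rpow (by positivity) (by positivity), Real.rpow_neg (by positivity : (0:ℝ) ≤ 1 + d⁻¹)]
  rw [div_eq_mul_inv, inv_inv, mul_comm]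

/-- Integrability of the product of the two Riesz kernels. -/
lemma riesz_integrable_mul (ν : ℕ) {α β : ℝ}
    (hα0 : 0 < α) (hαν : α < ν) (hβ0 : 0 < β) (hβν : β < ν)
    (hαβ : (ν : ℝ) < α + β) (x : EuclideanSpace ℝ (Fin ν)) (hx : x ≠ 0) :
    Integrable (fun y : EuclideanSpace ℝ (Fin ν) => ‖y‖ ^ (-α) * ‖x - y‖ ^ (-β)) volume := by
  have hmeas : Measurable fun y : EuclideanSpace ℝ (Fin ν) => ‖y‖ ^ (-α) * ‖x - y‖ ^ (-β) := by
    fun_prop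
  set d : ℝ := ‖x‖ with hdd
  have hd : 0 < d := norm_pos_iff.2 hx
  set A : Set (EuclideanSpace ℝ (Fin ν)) := ball 0 (d/2) with hA
  set B : Set (EuclideanSpace ℝ (Fin ν)) := ball x (d/2) with hB
  set Cs : Set (EuclideanSpace ℝ (Fin ν)) := closedBall 0 (2*d) \ (A ∪ B) with hCs
  set D : Set (EuclideanSpace ℝ (Fin ν)) := {y | 2*d ≤ ‖y‖} with hD
  have hcover : (univ : Set (EuclideanSpace ℝ (Fin ν))) ⊆ (A ∪ B) ∪ (Cs ∪ D) := by
    intro y _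
    by_cases h1 : y ∈ A ∪ B
    · exact Or.inl h1
    · by_cases h2 : ‖y‖ ≤ 2*d
      · exact Or.inr (Or.inl ⟨by simpa [mem_closedBall, dist_zero_right] using h2, h1⟩)
      · exact Or.inr (Or.inr (le_of_lt (not_le.1 h2)))
  rw [← integrableOn_univ]
  refine IntegrableOn.mono_set ?_ hcover
  have hAmeas : MeasurableSet A := measurableSet_ball
  have hBmeas : MeasurableSet B := measurableSet_ball
  have hCsmeas : MeasurableSet Cs := measurableSet_closedBall.diff (hAmeas.union hBmeas)
  have hDmeas : MeasurableSet D := measurableSet_le measurable_const measurable_norm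
  refine IntegrableOn.union (IntegrableOn.union ?_ ?_) (IntegrableOn.union ?_ ?_)
  · -- on A : ‖x - y‖ ≥ d/2
    have hint : IntegrableOn (fun y : EuclideanSpace ℝ (Fin ν) => (d/2) ^ (-β) * ‖y‖ ^ (-α))
        A volume :=
      ((riesz_integrableOn_closedBall ν hα0 hαν (d/2)).mono_set
        ball_subset_closedBall).const_mul _
    refine Integrable.mono' hint hmeas.aestronglyMeasurable.restrict ?_
    filter_upwards [ae_restrict_mem hAmeas] with y hy
    have hy' : ‖y‖ < d/2 := by simpa [hA, mem_ball, dist_zero_right] using hy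
    have hxy : d/2 ≤ ‖x - y‖ := by
      have := norm_sub_norm_le x y  -- ‖x‖ - ‖y‖ ≤ ‖x - y‖
      linarith
    have hb : ‖x - y‖ ^ (-β) ≤ (d/2) ^ (-β) :=
      Real.rpow_le_rpow_of_nonpos (by positivity) hxy (neg_nonpos.2 hβ0.le)
    rw [Real.norm_of_nonneg (by positivity)]
    calc ‖y‖ ^ (-α) * ‖x - y‖ ^ (-β) ≤ ‖y‖ ^ (-α) * (d/2) ^ (-β) := by
          exact mul_le_mul_of_nonneg_left hb (by positivity)
      _ = (d/2) ^ (-β) * ‖y‖ ^ (-α) := mul_comm _ _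
  · -- on B : ‖y‖ ≥ d/2, translate for ‖x - y‖
    have hsub : MeasurePreserving (fun y : EuclideanSpace ℝ (Fin ν) => x - y) volume volume :=
      Measure.measurePreserving_sub_left volume x
    have hemb : MeasurableEmbedding (fun y : EuclideanSpace ℝ (Fin ν) => x - y) :=
      (MeasurableEquiv.subLeft x).measurableEmbedding
    have hpre : (fun y : EuclideanSpace ℝ (Fin ν) => x - y) ⁻¹' (closedBall 0 (d/2))
        = closedBall x (d/2) := by
      ext y
      simp [mem_closedBall, dist_eq_norm, norm_sub_rev (x - y) 0]
      rw [norm_sub_rev]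
    have hint0' : IntegrableOn
        ((fun z : EuclideanSpace ℝ (Fin ν) => ‖z‖ ^ (-β)) ∘ (fun y => x - y))
        ((fun y : EuclideanSpace ℝ (Fin ν) => x - y) ⁻¹' (closedBall 0 (d/2))) volume :=
      (hsub.integrableOn_comp_preimage hemb).2
        (riesz_integrableOn_closedBall ν hβ0 hβν (d/2))
    rw [hpre] at hint0'
    have hint0 : IntegrableOn (fun y : EuclideanSpace ℝ (Fin ν) => ‖x - y‖ ^ (-β))
        (closedBall x (d/2)) volume := hint0'
    have hint : IntegrableOn
        (fun y : EuclideanSpace ℝ (Fin ν) => (d/2) ^ (-α) * ‖x - y‖ ^ (-β)) B volume :=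
      (hint0.mono_set ball_subset_closedBall).const_mul _
    refine Integrable.mono' hint hmeas.aestronglyMeasurable.restrict ?_
    filter_upwards [ae_restrict_mem hBmeas] with y hy
    have hy' : ‖y - x‖ < d/2 := by simpa [hB, mem_ball, dist_eq_norm] using hy
    have hyn : d/2 ≤ ‖y‖ := by
      have := norm_sub_norm_le x (x - y)
      have h2 : x - (x - y) = y := by abel
      rw [h2] at this
      have h3 : ‖x - y‖ < d/2 := by rwa [norm_sub_rev] at hy'
      linarith
    have hb : ‖y‖ ^ (-α) ≤ (d/2) ^ (-α) :=
      Real.rpow_le_rpow_of_nonpos (by positivity) hyn (neg_nonpos.2 hα0.le)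
    rw [Real.norm_of_nonneg (by positivity)]
    exact mul_le_mul_of_nonneg_right hb (by positivity)
  · -- on Cs : bounded
    have hint : IntegrableOn
        (fun _ : EuclideanSpace ℝ (Fin ν) => (d/2) ^ (-α) * (d/2) ^ (-β)) Cs volume := by
      refine integrableOn_const (ne_of_lt ?_)
      exact lt_of_le_of_lt (measure_mono diff_subset) measure_closedBall_lt_top
    refine Integrable.mono' hint hmeas.aestronglyMeasurable.restrict ?_
    filter_upwards [ae_restrict_mem hCsmeas] with y hy
    obtain ⟨-, hy2⟩ := hy
    rw [mem_union, not_or] at hy2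
    have h1 : d/2 ≤ ‖y‖ := by
      by_contra h
      exact hy2.1 (by simpa [hA, mem_ball, dist_zero_right] using not_le.1 h)
    have h2 : d/2 ≤ ‖x - y‖ := by
      by_contra h
      refine hy2.2 ?_
      rw [hB, mem_ball, dist_eq_norm, norm_sub_rev]
      exact not_le.1 h
    have hb1 : ‖y‖ ^ (-α) ≤ (d/2) ^ (-α) :=
      Real.rpow_le_rpow_of_nonpos (by positivity) h1 (neg_nonpos.2 hα0.le)
    have hb2 : ‖x - y‖ ^ (-β) ≤ (d/2) ^ (-β) :=
      Real.rpow_le_rpow_of_nonpos (by positivity) h2 (neg_nonpos.2 hβ0.le)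
    rw [Real.norm_of_nonneg (by positivity)]
    exact mul_le_mul hb1 hb2 (by positivity) (by positivity)
  · -- on D : tail
    have hint : IntegrableOn
        (fun y : EuclideanSpace ℝ (Fin ν) => (2:ℝ) ^ β * ‖y‖ ^ (-(α+β))) D volume :=
      (riesz_integrableOn_tail ν hαβ (by positivity)).const_mul _
    refine Integrable.mono' hint hmeas.aestronglyMeasurable.restrict ?_
    filter_upwards [ae_restrict_mem hDmeas] with y hy
    have hy' : 2*d ≤ ‖y‖ := hy
    have hy0 : (0:ℝ) < ‖y‖ := lt_of_lt_of_le (by positivity) hy'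
    have hxy : ‖y‖/2 ≤ ‖x - y‖ := by
      have h1 := norm_sub_norm_le y x
      have h2 : ‖y - x‖ = ‖x - y‖ := norm_sub_rev _ _
      have h3 : d ≤ ‖y‖/2 := by linarith
      linarith
    have hb : ‖x - y‖ ^ (-β) ≤ (‖y‖/2) ^ (-β) :=
      Real.rpow_le_rpow_of_nonpos (by positivity) hxy (neg_nonpos.2 hβ0.le)
    have heq : (‖y‖/2) ^ (-β) = (2:ℝ) ^ β * ‖y‖ ^ (-β) := by
      rw [Real.div_rpow (norm_nonneg y) (by norm_num : (0:ℝ) ≤ 2),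
        Real.rpow_neg (by norm_num : (0:ℝ) ≤ 2), div_eq_mul_inv, inv_inv, mul_comm]
    rw [Real.norm_of_nonneg (by positivity)]
    calc ‖y‖ ^ (-α) * ‖x - y‖ ^ (-β) ≤ ‖y‖ ^ (-α) * ((2:ℝ) ^ β * ‖y‖ ^ (-β)) := by
          rw [← heq]; exact mul_le_mul_of_nonneg_left hb (by positivity)
      _ = (2:ℝ) ^ β * ‖y‖ ^ (-(α+β)) := by
          rw [neg_add, Real.rpow_add hy0]; ring

/-- Convolution of Riesz potentials (Lemma Lrp):
`|x|^{−α} * |x|^{−β} = C_{α,β;ν} |x|^{−(α+β−ν)}` on `ℝ^ν`. -/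
theorem statement13 (ν : ℕ) (hν : 1 ≤ ν) (α β : ℝ)
    (hα0 : 0 < α) (hαν : α < ν) (hβ0 : 0 < β) (hβν : β < ν)
    (hαβ : (ν : ℝ) < α + β) :
    ∃ C > (0:ℝ), ∀ x : EuclideanSpace ℝ (Fin ν), x ≠ 0 →
      Integrable (fun y : EuclideanSpace ℝ (Fin ν) => ‖y‖ ^ (-α) * ‖x - y‖ ^ (-β)) volume ∧
      (∫ y : EuclideanSpace ℝ (Fin ν), ‖y‖ ^ (-α) * ‖x - y‖ ^ (-β))
        = C * ‖x‖ ^ (-(α + β - ν)) := by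
  set e : EuclideanSpace ℝ (Fin ν) := EuclideanSpace.single ⟨0, hν⟩ (1:ℝ) with he
  have hnorme : ‖e‖ = 1 := by
    rw [he, EuclideanSpace.norm_single]; norm_num
  have he0 : e ≠ 0 := by
    intro h
    rw [h, norm_zero] at hnorme
    norm_num at hnorme
  set C := ∫ y : EuclideanSpace ℝ (Fin ν), ‖y‖ ^ (-α) * ‖e - y‖ ^ (-β) with hC
  have hint_e : Integrable
      (fun y : EuclideanSpace ℝ (Fin ν) => ‖y‖ ^ (-α) * ‖e - y‖ ^ (-β)) volume :=
    riesz_integrable_mul ν hα0 hαν hβ0 hβν hαβ e he0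
  haveI : Nontrivial (EuclideanSpace ℝ (Fin ν)) := nontrivial_of_ne e 0 he0
  have hCpos : 0 < C := by
    rw [hC, integral_pos_iff_support_of_nonneg_ae (ae_of_all _ fun y => by positivity) hint_e]
    have hsub : ball e (1/2) \ {e}
        ⊆ Function.support fun y : EuclideanSpace ℝ (Fin ν) =>
            ‖y‖ ^ (-α) * ‖e - y‖ ^ (-β) := by
      rintro y ⟨hy1, hy2⟩
      have hye : y ≠ e := hy2
      have hy0 : y ≠ 0 := by
        intro h
        rw [mem_ball, h, dist_comm, dist_zero_right, hnorme] at hy1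
        norm_num at hy1
      have hpos : (0:ℝ) < ‖y‖ ^ (-α) * ‖e - y‖ ^ (-β) := by
        apply mul_pos
        · exact Real.rpow_pos_of_pos (norm_pos_iff.2 hy0) _
        · exact Real.rpow_pos_of_pos (norm_pos_iff.2 (sub_ne_zero.2 (Ne.symm hye))) _
      exact hpos.ne'
    calc (0:ℝ≥0∞) < volume (ball e (1/2)) := measure_ball_pos _ _ (by norm_num)
      _ = volume (ball e (1/2) \ {e}) := (measure_diff_null (measure_singleton _)).symm
      _ ≤ _ := measure_mono hsub
  refine ⟨C, hCpos, fun x hx => ⟨riesz_integrable_mul ν hα0 hαν hβ0 hβν hαβ x hx, ?_⟩⟩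
  set c : ℝ := ‖x‖ with hc
  have hc0 : 0 < c := norm_pos_iff.2 hx
  set u : EuclideanSpace ℝ (Fin ν) := c⁻¹ • x with hu'
  have hu : ‖u‖ = 1 := by
    rw [hu', norm_smul, norm_inv, Real.norm_of_nonneg (norm_nonneg x), ← hc,
      inv_mul_cancel₀ hc0.ne']
  have hcu : c • u = x := by
    rw [hu', smul_smul, mul_inv_cancel₀ hc0.ne', one_smul]
  set R : EuclideanSpace ℝ (Fin ν) ≃ₗᵢ[ℝ] EuclideanSpace ℝ (Fin ν) :=
    Submodule.reflection (ℝ ∙ (e - u))ᗮ with hR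
  have hRe : R e = u := Submodule.reflection_sub (by rw [hnorme, hu])
  have key : ∀ z : EuclideanSpace ℝ (Fin ν),
      ‖c • R z‖ ^ (-α) * ‖x - c • R z‖ ^ (-β)
        = (c ^ (-α) * c ^ (-β)) * (‖z‖ ^ (-α) * ‖e - z‖ ^ (-β)) := by
    intro z
    have h1 : ‖c • R z‖ = c * ‖z‖ := by
      rw [norm_smul, Real.norm_of_nonneg hc0.le, R.norm_map]
    have h2 : ‖x - c • R z‖ = c * ‖e - z‖ := by
      rw [← hcu, ← smul_sub, norm_smul, Real.norm_of_nonneg hc0.le, ← hRe, ← R.map_sub,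
        R.norm_map]
    rw [h1, h2, Real.mul_rpow hc0.le (norm_nonneg _), Real.mul_rpow hc0.le (norm_nonneg _)]
    ring
  have step1 : ∫ z : EuclideanSpace ℝ (Fin ν),
      ‖c • z‖ ^ (-α) * ‖x - c • z‖ ^ (-β)
      = |((c : ℝ) ^ finrank ℝ (EuclideanSpace ℝ (Fin ν)))⁻¹|
          • ∫ y : EuclideanSpace ℝ (Fin ν), ‖y‖ ^ (-α) * ‖x - y‖ ^ (-β) :=
    Measure.integral_comp_smul volume
      (fun y : EuclideanSpace ℝ (Fin ν) => ‖y‖ ^ (-α) * ‖x - y‖ ^ (-β)) c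
  have step2 : ∫ z : EuclideanSpace ℝ (Fin ν),
      ‖c • R z‖ ^ (-α) * ‖x - c • R z‖ ^ (-β)
      = ∫ z : EuclideanSpace ℝ (Fin ν), ‖c • z‖ ^ (-α) * ‖x - c • z‖ ^ (-β) :=
    MeasureTheory.integral_comp R
      (fun z : EuclideanSpace ℝ (Fin ν) => ‖c • z‖ ^ (-α) * ‖x - c • z‖ ^ (-β))
  have step3 : ∫ z : EuclideanSpace ℝ (Fin ν),
      ‖c • R z‖ ^ (-α) * ‖x - c • R z‖ ^ (-β)
      = (c ^ (-α) * c ^ (-β)) * C := by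
    rw [hC, ← integral_const_mul]
    exact integral_congr_ae (ae_of_all _ key)
  have habs : |((c : ℝ) ^ finrank ℝ (EuclideanSpace ℝ (Fin ν)))⁻¹|
      = (c ^ (ν:ℕ))⁻¹ := by
    rw [finrank_euclideanSpace_fin, abs_of_pos (by positivity)]
  have hfin : ∫ y : EuclideanSpace ℝ (Fin ν), ‖y‖ ^ (-α) * ‖x - y‖ ^ (-β)
      = (c ^ (ν:ℕ)) * ((c ^ (-α) * c ^ (-β)) * C) := by
    rw [← step3, step2, step1, habs, smul_eq_mul, ← mul_assoc,
      mul_inv_cancel₀ (by positivity : (c:ℝ) ^ (ν:ℕ) ≠ 0), one_mul]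
  rw [hfin]
  have : (c:ℝ) ^ (ν:ℕ) * (c ^ (-α) * c ^ (-β)) = c ^ (-(α + β - ν)) := by
    rw [← Real.rpow_natCast c ν, ← Real.rpow_add hc0, ← Real.rpow_add hc0]
    congr 1
    ring
  rw [← mul_assoc, this, mul_comm]
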